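/- Let κ be a limit ordinal, let Δ ⊆ κ be a discrete set of ordinals, let U be an ultrafilter on κ, and let f : κ → κ be a function with f(α) ∈ Δ for every α < κ that is unbounded modulo U. Then the function g : κ → κ defined by g(α) = sup(Δ ∩ f(α)) satisfies g(α) < f(α) for every α < κ, and g is unbounded modulo U. (This expresses combinatorially that for a κ-complete ultrafilter U on κ, the ordinal κ does not belong to the image of Δ under the ultrapower embedding.) -/

import Mathlib

/-- The set of ordinals below `o`, as a type. -/
abbrev Below (o : Ordinal.{0}) : Type 1 := {α : Ordinal.{0} // α < o}

/-- A set of ordinals is *discrete* if for every `α ∈ Δ`, `sup (Δ ∩ α) < α`. -/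
def IsDiscreteOrdSet (Δ : Set Ordinal.{0}) : Prop :=
  ∀ α ∈ Δ, sSup (Δ ∩ Set.Iio α) < α

/-- Suppose `κ` is a limit ordinal, `Δ ⊆ κ` is discrete, `U` is an ultrafilter on `κ`,
and `f : κ → κ` takes values in `Δ` and is unbounded modulo `U`. Then
`g(α) = sup (Δ ∩ f(α))` satisfies `g(α) < f(α)` for every `α`, and `g` is unbounded
modulo `U`. -/
theorem regressive_below_discrete_unbounded (κ : Ordinal.{0}) (hκ : Order.IsSuccLimit κ)
    (Δ : Set Ordinal.{0}) (hΔ : Δ ⊆ Set.Iio κ) (hdisc : IsDiscreteOrdSet Δ)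
    (U : Ultrafilter (Below κ))
    (f : Below κ → Below κ) (hf : ∀ α : Below κ, (f α : Ordinal) ∈ Δ)
    (hunb : ∀ β : Ordinal.{0}, β < κ → {α : Below κ | β < (f α : Ordinal)} ∈ U) :
    (∀ α : Below κ, sSup (Δ ∩ Set.Iio (f α : Ordinal)) < (f α : Ordinal)) ∧
    (∀ β : Ordinal.{0}, β < κ →
      {α : Below κ | β < sSup (Δ ∩ Set.Iio (f α : Ordinal))} ∈ U) := by
  refine ⟨fun α => hdisc _ (hf α), fun β hβ => ?_⟩
  -- Δ is unbounded below κ: otherwise f would be bounded, contradicting hunb.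
  obtain ⟨γ, hγΔ, hβγ⟩ : ∃ γ ∈ Δ, β < γ := by
    by_contra h
    push_neg at h
    obtain ⟨α, hα⟩ := Ultrafilter.nonempty_of_mem (hunb β hβ)
    exact absurd (h _ (hf α)) (not_le.2 hα)
  refine U.toFilter.mem_of_superset (hunb γ (hΔ hγΔ)) ?_
  intro α hα
  calc β < γ := hβγ
    _ ≤ sSup (Δ ∩ Set.Iio (f α : Ordinal)) :=
      le_csSup ⟨(f α : Ordinal), fun x hx => le_of_lt hx.2⟩ ⟨hγΔ, hα⟩
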